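/- Let σ be a permutation of {1,…,d}, let a, a' ∈ ℝ_+^d, and let T = T_σ(a), S = T_σ(a'). Fix i ∈ {1,…,d−1} and r ≥ 0, and suppose that x_i(a) and x_i(a') have the same itinerary up to the r-th iteration, i.e., for every 0 ≤ k < r and every ℓ ∈ {1,…,d}, T^k(x_i(a)) ∈ I_ℓ(a) if and only if S^k(x_i(a')) ∈ I_ℓ(a'). Then |T^r(x_i(a)) − S^r(x_i(a'))| ≤ (r+1)·d²·‖a − a'‖_∞. -/

import Mathlib

open MeasureTheory Filter Set

/-- `partialSum d a i` is the point `x_i(a) = Σ_{j < i} a_j` (with `Fin d` zero-indexed, so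
`i : ℕ` ranges over `0, …, d`). -/
noncomputable def partialSum (d : ℕ) (a : Fin d → ℝ) (i : ℕ) : ℝ :=
  ∑ j ∈ Finset.univ.filter (fun j : Fin d => (j : ℕ) < i), a j

/-- `partialSumPerm d σ a i` is the point `x'_i(a) = Σ_{j=1}^i a_{σ⁻¹(j)} = Σ_{j : σ j < i} a_j`. -/
noncomputable def partialSumPerm (d : ℕ) (σ : Equiv.Perm (Fin d)) (a : Fin d → ℝ) (i : ℕ) : ℝ :=
  ∑ j ∈ Finset.univ.filter (fun j : Fin d => ((σ j : ℕ)) < i), a j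

/-- The interval `I_a = [0, Σ_i a_i)`. -/
noncomputable def ietInterval (d : ℕ) (a : Fin d → ℝ) : Set ℝ :=
  Set.Ico 0 (partialSum d a d)

/-- The interval exchange transformation `T_σ(a)`: on the interval
`I_i = [x_{i-1}(a), x_i(a))` (zero-indexed: `[x_i, x_{i+1})` for `i : Fin d`) it translates by
`x'_{σ(i)-1}(a) - x_{i-1}(a)`.  Outside `I_a` it is (arbitrarily) the identity. -/
noncomputable def iet (d : ℕ) (σ : Equiv.Perm (Fin d)) (a : Fin d → ℝ) (x : ℝ) : ℝ :=
  if h : ∃ i : Fin d, partialSum d a (i : ℕ) ≤ x ∧ x < partialSum d a ((i : ℕ) + 1) then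
    x - partialSum d a ((h.choose : Fin d) : ℕ) + partialSumPerm d σ a ((σ h.choose : Fin d) : ℕ)
  else x

/-- `σ` is irreducible: no `k` with `1 ≤ k < d` such that `σ({1,…,k}) = {1,…,k}`. -/
def IETIrreducible (d : ℕ) (σ : Equiv.Perm (Fin d)) : Prop :=
  ∀ k : ℕ, 0 < k → k < d → ¬ (∀ i : Fin d, (i : ℕ) < k → (σ i : ℕ) < k)

/-- The function `L_{a,b} : I_a → ℝ`, equal to `y_i(b) - y'_{σ(i)}(b)` on `I_i(a)`
(extended by `0` off `I_a`). -/
noncomputable def ietL (d : ℕ) (σ : Equiv.Perm (Fin d)) (a b : Fin d → ℝ) (x : ℝ) : ℝ :=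
  if h : ∃ i : Fin d, partialSum d a (i : ℕ) ≤ x ∧ x < partialSum d a ((i : ℕ) + 1) then
    partialSum d b ((h.choose : ℕ) + 1) - partialSumPerm d σ b ((σ h.choose : ℕ) + 1)
  else 0

/-- A connection `(i,j,m)` of `T = T_σ(a)`: `i, j ∈ {0,…,d-1}`, `m > 0`, `T^m(x_i) = x_j`. -/
def IsConnection (d : ℕ) (σ : Equiv.Perm (Fin d)) (a : Fin d → ℝ) (i j m : ℕ) : Prop :=
  i < d ∧ j < d ∧ 0 < m ∧ (iet d σ a)^[m] (partialSum d a i) = partialSum d a j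

/-- `μ ∈ ℳ_a`: a non-atomic `T_σ(a)`-invariant Borel probability measure on `I_a`. -/
def IsIETInvariantMeasure (d : ℕ) (σ : Equiv.Perm (Fin d)) (a : Fin d → ℝ)
    (μ : Measure ℝ) : Prop :=
  IsProbabilityMeasure μ ∧ NoAtoms μ ∧ μ (ietInterval d a)ᶜ = 0 ∧
    Measure.map (iet d σ a) μ = μ

/-- `(a,b)` is a positive pair. -/
def IsPositivePair (d : ℕ) (σ : Equiv.Perm (Fin d)) (a b : Fin d → ℝ) : Prop :=
  (∀ μ : Measure ℝ, IsIETInvariantMeasure d σ a μ → 0 < ∫ x, ietL d σ a b x ∂μ) ∧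
  (∀ i j m : ℕ, IsConnection d σ a i j m →
    partialSum d b i - partialSum d b j <
      ∑ n ∈ Finset.range m, ietL d σ a b ((iet d σ a)^[n] (partialSum d a i)))

/-- `ε_n(a)`. -/
noncomputable def ietEps (d : ℕ) (σ : Equiv.Perm (Fin d)) (a : Fin d → ℝ) (n : ℕ) : ℝ :=
  sInf { v : ℝ | ∃ i j k l : ℕ, 1 ≤ i ∧ i ≤ d - 1 ∧ 1 ≤ j ∧ j ≤ d - 1 ∧
    k ≤ n ∧ l ≤ n ∧ (i, k) ≠ (j, l) ∧
    v = |(iet d σ a)^[k] (partialSum d a i) - (iet d σ a)^[l] (partialSum d a j)| }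

/-- `a` is of recurrence type: `limsup n ε_n(a) > 0`. -/
def OfRecurrenceType (d : ℕ) (σ : Equiv.Perm (Fin d)) (a : Fin d → ℝ) : Prop :=
  0 < Filter.limsup (fun n : ℕ => (n : ℝ) * ietEps d σ a n) Filter.atTop

/-- `a` is of bounded type: `liminf n ε_n(a) > 0`. -/
def OfBoundedType (d : ℕ) (σ : Equiv.Perm (Fin d)) (a : Fin d → ℝ) : Prop :=
  0 < Filter.liminf (fun n : ℕ => (n : ℝ) * ietEps d σ a n) Filter.atTop

/-- The (topological) support of a measure on `ℝ`. -/
def measSupport (μ : Measure ℝ) : Set ℝ :=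
  {x : ℝ | ∀ r : ℝ, 0 < r → 0 < μ (Set.Ioo (x - r) (x + r))}

/-- `μ` is a finite regular Borel measure on `ℝ` which is `(C,α)`-decaying and `D`-Federer. -/
def IsDecayingFederer (μ : Measure ℝ) (C α D : ℝ) : Prop :=
  IsFiniteMeasure μ ∧ μ.Regular ∧
  ∀ x ∈ measSupport μ, ∀ ε r : ℝ, 0 < ε → ε < 1 → 0 < r → r < 1 →
    μ (Set.Ioo (x - ε * r) (x + ε * r)) ≤
      ENNReal.ofReal (C * ε ^ α) * μ (Set.Ioo (x - r) (x + r)) ∧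
    μ (Set.Ioo (x - 3 * r) (x + 3 * r)) ≤
      ENNReal.ofReal D * μ (Set.Ioo (x - r) (x + r))

/-- `μ` is decaying and Federer: `(C,α)`-decaying and `D`-Federer for some `C, α, D > 0`. -/
def DecayingFederer (μ : Measure ℝ) : Prop :=
  ∃ C α D : ℝ, 0 < C ∧ 0 < α ∧ 0 < D ∧ IsDecayingFederer μ C α D

section Aux

variable {d : ℕ} {σ : Equiv.Perm (Fin d)} {a a' : Fin d → ℝ}

lemma partialSum_mono (ha : ∀ i, 0 ≤ a i) {m n : ℕ} (h : m ≤ n) :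
    partialSum d a m ≤ partialSum d a n := by
  apply Finset.sum_le_sum_of_subset_of_nonneg
  · intro j hj
    simp only [Finset.mem_filter, Finset.mem_univ, true_and] at *
    exact hj.trans_le h
  · intro j _ _; exact ha j

lemma partialSum_nonneg (ha : ∀ i, 0 ≤ a i) (n : ℕ) : 0 ≤ partialSum d a n :=
  Finset.sum_nonneg fun j _ => ha j

lemma partialSumPerm_nonneg (ha : ∀ i, 0 ≤ a i) (n : ℕ) : 0 ≤ partialSumPerm d σ a n :=
  Finset.sum_nonneg fun j _ => ha j

lemma partialSum_succ (ℓ : Fin d) :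
    partialSum d a ((ℓ : ℕ) + 1) = partialSum d a ℓ + a ℓ := by
  unfold partialSum
  have : (Finset.univ.filter fun j : Fin d => (j : ℕ) < (ℓ : ℕ) + 1)
      = insert ℓ (Finset.univ.filter fun j : Fin d => (j : ℕ) < ℓ) := by
    ext j
    simp [Nat.lt_succ_iff_lt_or_eq, Fin.ext_iff, or_comm]
    rw [Fin.le_iff_val_le_val, Fin.lt_iff_val_lt_val]; omega
  rw [this, Finset.sum_insert (by simp), add_comm]

lemma partialSumPerm_succ (ℓ : Fin d) :
    partialSumPerm d σ a ((σ ℓ : ℕ) + 1) = partialSumPerm d σ a (σ ℓ) + a ℓ := by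
  unfold partialSumPerm
  have : (Finset.univ.filter fun j : Fin d => ((σ j : ℕ)) < (σ ℓ : ℕ) + 1)
      = insert ℓ (Finset.univ.filter fun j : Fin d => ((σ j : ℕ)) < (σ ℓ : ℕ)) := by
    ext j
    simp only [Finset.mem_filter, Finset.mem_univ, true_and, Finset.mem_insert,
      Nat.lt_succ_iff_lt_or_eq]
    constructor
    · rintro (h | h)
      · exact Or.inr h
      · exact Or.inl (σ.injective (Fin.ext h))
    · rintro (rfl | h)
      · exact Or.inr rfl
      · exact Or.inl h
  rw [this, Finset.sum_insert (by simp), add_comm]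

lemma partialSumPerm_top : partialSumPerm d σ a d = partialSum d a d := by
  unfold partialSumPerm partialSum
  congr 1
  ext j
  simp [(σ j).isLt, j.isLt]

lemma partialSumPerm_mono (ha : ∀ i, 0 ≤ a i) {m n : ℕ} (h : m ≤ n) :
    partialSumPerm d σ a m ≤ partialSumPerm d σ a n := by
  apply Finset.sum_le_sum_of_subset_of_nonneg
  · intro j hj
    simp only [Finset.mem_filter, Finset.mem_univ, true_and] at *
    exact hj.trans_le h
  · intro j _ _; exact ha j

lemma interval_unique (ha : ∀ i, 0 ≤ a i) {x : ℝ} {j ℓ : Fin d}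
    (hj : partialSum d a (j : ℕ) ≤ x ∧ x < partialSum d a ((j : ℕ) + 1))
    (hℓ : partialSum d a (ℓ : ℕ) ≤ x ∧ x < partialSum d a ((ℓ : ℕ) + 1)) : j = ℓ := by
  by_contra hne
  rcases (Fin.lt_or_lt_of_ne hne) with h | h
  · exact absurd ((hj.2.trans_le (partialSum_mono ha h)).trans_le hℓ.1) (lt_irrefl x)
  · exact absurd ((hℓ.2.trans_le (partialSum_mono ha h)).trans_le hj.1) (lt_irrefl x)

lemma iet_apply (ha : ∀ i, 0 ≤ a i) {x : ℝ} {ℓ : Fin d}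
    (hx : partialSum d a (ℓ : ℕ) ≤ x ∧ x < partialSum d a ((ℓ : ℕ) + 1)) :
    iet d σ a x = x - partialSum d a (ℓ : ℕ) + partialSumPerm d σ a ((σ ℓ : ℕ)) := by
  have h : ∃ i : Fin d, partialSum d a (i : ℕ) ≤ x ∧ x < partialSum d a ((i : ℕ) + 1) := ⟨ℓ, hx⟩
  rw [iet, dif_pos h]
  have : h.choose = ℓ := interval_unique ha h.choose_spec hx
  rw [this]

lemma partialSum_diff (a a' : Fin d → ℝ) (n : ℕ) :
    |partialSum d a n - partialSum d a' n| ≤ (d : ℝ) * ‖a - a'‖ := by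
  unfold partialSum
  rw [← Finset.sum_sub_distrib]
  calc |∑ j ∈ Finset.univ.filter (fun j : Fin d => (j : ℕ) < n), (a j - a' j)|
      ≤ ∑ j ∈ Finset.univ.filter (fun j : Fin d => (j : ℕ) < n), |a j - a' j| :=
        Finset.abs_sum_le_sum_abs _ _
    _ ≤ ∑ _j ∈ Finset.univ.filter (fun j : Fin d => (j : ℕ) < n), ‖a - a'‖ := by
        apply Finset.sum_le_sum
        intro j _
        simpa [Real.norm_eq_abs] using norm_le_pi_norm (a - a') j
    _ = ((Finset.univ.filter (fun j : Fin d => (j : ℕ) < n)).card : ℝ) * ‖a - a'‖ := by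
        rw [Finset.sum_const, nsmul_eq_mul]
    _ ≤ (d : ℝ) * ‖a - a'‖ := by
        apply mul_le_mul_of_nonneg_right _ (norm_nonneg _)
        exact_mod_cast le_trans (Finset.card_filter_le _ _) (by simp)

lemma partialSumPerm_diff (σ : Equiv.Perm (Fin d)) (a a' : Fin d → ℝ) (n : ℕ) :
    |partialSumPerm d σ a n - partialSumPerm d σ a' n| ≤ (d : ℝ) * ‖a - a'‖ := by
  unfold partialSumPerm
  rw [← Finset.sum_sub_distrib]
  calc |∑ j ∈ Finset.univ.filter (fun j : Fin d => ((σ j : ℕ)) < n), (a j - a' j)|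
      ≤ ∑ j ∈ Finset.univ.filter (fun j : Fin d => ((σ j : ℕ)) < n), |a j - a' j| :=
        Finset.abs_sum_le_sum_abs _ _
    _ ≤ ∑ _j ∈ Finset.univ.filter (fun j : Fin d => ((σ j : ℕ)) < n), ‖a - a'‖ := by
        apply Finset.sum_le_sum
        intro j _
        simpa [Real.norm_eq_abs] using norm_le_pi_norm (a - a') j
    _ = ((Finset.univ.filter (fun j : Fin d => ((σ j : ℕ)) < n)).card : ℝ) * ‖a - a'‖ := by
        rw [Finset.sum_const, nsmul_eq_mul]
    _ ≤ (d : ℝ) * ‖a - a'‖ := by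
        apply mul_le_mul_of_nonneg_right _ (norm_nonneg _)
        exact_mod_cast le_trans (Finset.card_filter_le _ _) (by simp)

lemma exists_interval (ha : ∀ i, 0 ≤ a i) {x : ℝ} (hx0 : 0 ≤ x)
    (hxd : x < partialSum d a d) :
    ∃ ℓ : Fin d, partialSum d a (ℓ : ℕ) ≤ x ∧ x < partialSum d a ((ℓ : ℕ) + 1) := by
  have hd : 0 < d := by
    by_contra h
    push_neg at h
    interval_cases d
    · simp [partialSum] at hxd
      exact absurd (hx0.trans_lt hxd) (lt_irrefl 0)
  set s := Finset.univ.filter (fun j : Fin d => partialSum d a (j : ℕ) ≤ x) with hs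
  have hne : s.Nonempty := by
    refine ⟨⟨0, hd⟩, ?_⟩
    simp only [hs, Finset.mem_filter, Finset.mem_univ, true_and]
    simpa [partialSum] using hx0
  set ℓ := s.max' hne with hℓ
  have hmem : ℓ ∈ s := s.max'_mem hne
  simp only [hs, Finset.mem_filter, Finset.mem_univ, true_and] at hmem
  refine ⟨ℓ, hmem, ?_⟩
  by_contra h
  push_neg at h
  rcases lt_or_eq_of_le (Nat.succ_le_of_lt ℓ.isLt) with h1 | h1
  · have hmem' : (⟨(ℓ : ℕ) + 1, h1⟩ : Fin d) ∈ s := by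
      simp only [hs, Finset.mem_filter, Finset.mem_univ, true_and]
      exact h
    have h2 : (ℓ : ℕ) + 1 ≤ (ℓ : ℕ) := Fin.le_def.mp (Finset.le_max' s _ hmem')
    omega
  · have h1' : (ℓ : ℕ) + 1 = d := h1
    rw [h1'] at h
    exact absurd (hxd.trans_le h) (lt_irrefl x)

lemma iet_mem (ha : ∀ i, 0 < a i) {x : ℝ} (hx0 : 0 ≤ x) (hxd : x < partialSum d a d) :
    0 ≤ iet d σ a x ∧ iet d σ a x < partialSum d a d := by
  have ha' : ∀ i, 0 ≤ a i := fun i => (ha i).le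
  obtain ⟨ℓ, hℓ⟩ := exists_interval ha' hx0 hxd
  rw [iet_apply ha' hℓ]
  constructor
  · have h1 : 0 ≤ x - partialSum d a (ℓ : ℕ) := by linarith [hℓ.1]
    have h2 := partialSumPerm_nonneg (σ := σ) ha' ((σ ℓ : ℕ))
    linarith
  · have h1 : x - partialSum d a (ℓ : ℕ) < a ℓ := by
      have := hℓ.2
      rw [partialSum_succ] at this
      linarith
    have h2 : partialSumPerm d σ a (σ ℓ) + a ℓ ≤ partialSum d a d := by
      rw [← partialSumPerm_succ, ← partialSumPerm_top (σ := σ)]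
      exact partialSumPerm_mono ha' (σ ℓ).isLt
    linarith

lemma iet_iterate_mem (ha : ∀ i, 0 < a i) {x : ℝ} (hx0 : 0 ≤ x)
    (hxd : x < partialSum d a d) (k : ℕ) :
    0 ≤ (iet d σ a)^[k] x ∧ (iet d σ a)^[k] x < partialSum d a d := by
  induction k with
  | zero => exact ⟨hx0, hxd⟩
  | succ k ih =>
    rw [Function.iterate_succ_apply']
    exact iet_mem ha ih.1 ih.2

end Aux

/-- itinerary estimate. Let `T = T_σ(a)` and `S = T_σ(a')`, and suppose the
discontinuity point `x_i(a)` (for `1 ≤ i ≤ d-1`) has the same itinerary under `T` as `x_i(a')`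
has under `S` up to the `r`-th iterate. Then
`|T^r(x_i(a)) - S^r(x_i(a'))| ≤ (r+1) d² ‖a - a'‖_∞`
(here the norm on `Fin d → ℝ` is the sup norm). -/
theorem itinerary_estimate (d : ℕ) (hd : 2 ≤ d) (σ : Equiv.Perm (Fin d))
    (a a' : Fin d → ℝ) (ha : ∀ i, 0 < a i) (ha' : ∀ i, 0 < a' i)
    (i : ℕ) (hi1 : 1 ≤ i) (hi2 : i ≤ d - 1) (r : ℕ)
    (hitin : ∀ k : ℕ, k < r → ∀ ℓ : Fin d,
      ((iet d σ a)^[k] (partialSum d a i) ∈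
        Set.Ico (partialSum d a (ℓ : ℕ)) (partialSum d a ((ℓ : ℕ) + 1))) ↔
      ((iet d σ a')^[k] (partialSum d a' i) ∈
        Set.Ico (partialSum d a' (ℓ : ℕ)) (partialSum d a' ((ℓ : ℕ) + 1)))) :
    |(iet d σ a)^[r] (partialSum d a i) - (iet d σ a')^[r] (partialSum d a' i)| ≤
      ((r : ℝ) + 1) * (d : ℝ) ^ 2 * ‖a - a'‖ := by
  have han : ∀ j, 0 ≤ a j := fun j => (ha j).le
  have ha'n : ∀ j, 0 ≤ a' j := fun j => (ha' j).le
  have hN : (0:ℝ) ≤ ‖a - a'‖ := norm_nonneg _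
  have hd2 : (2:ℝ) ≤ (d:ℝ) := by exact_mod_cast hd
  -- x_i(a) ∈ I_a
  have hmem : 0 ≤ partialSum d a i ∧ partialSum d a i < partialSum d a d := by
    constructor
    · exact partialSum_nonneg han i
    · have h1 : partialSum d a i ≤ partialSum d a (d - 1) := partialSum_mono han hi2
      have h2 : partialSum d a ((d - 1) + 1) = partialSum d a (d - 1) + a ⟨d - 1, by omega⟩ :=
        partialSum_succ (a := a) ⟨d - 1, by omega⟩
      have h3 : (d - 1) + 1 = d := by omega
      rw [h3] at h2
      have := ha ⟨d - 1, by omega⟩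
      linarith
  have hmem' : 0 ≤ partialSum d a' i ∧ partialSum d a' i < partialSum d a' d := by
    constructor
    · exact partialSum_nonneg ha'n i
    · have h1 : partialSum d a' i ≤ partialSum d a' (d - 1) := partialSum_mono ha'n hi2
      have h2 : partialSum d a' ((d - 1) + 1) = partialSum d a' (d - 1) + a' ⟨d - 1, by omega⟩ :=
        partialSum_succ (a := a') ⟨d - 1, by omega⟩
      have h3 : (d - 1) + 1 = d := by omega
      rw [h3] at h2
      have := ha' ⟨d - 1, by omega⟩
      linarith
  induction r with
  | zero =>
    simp only [Function.iterate_zero, id_eq, Nat.cast_zero, zero_add, one_mul]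
    calc |partialSum d a i - partialSum d a' i| ≤ (d : ℝ) * ‖a - a'‖ := partialSum_diff a a' i
      _ ≤ (d : ℝ) ^ 2 * ‖a - a'‖ := by
        have hdd : (d : ℝ) ≤ (d : ℝ) ^ 2 := by nlinarith
        exact mul_le_mul_of_nonneg_right hdd hN
  | succ r IH =>
    have IH' := IH (fun k hk ℓ => hitin k (hk.trans (Nat.lt_succ_self r)) ℓ)
    have hmr := iet_iterate_mem (σ := σ) ha hmem.1 hmem.2 r
    obtain ⟨ℓ, hℓ⟩ := exists_interval han hmr.1 hmr.2
    have hℓ' : partialSum d a' (ℓ : ℕ) ≤ (iet d σ a')^[r] (partialSum d a' i) ∧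
        (iet d σ a')^[r] (partialSum d a' i) < partialSum d a' ((ℓ : ℕ) + 1) := by
      have := (hitin r (Nat.lt_succ_self r) ℓ).mp (Set.mem_Ico.mpr hℓ)
      exact Set.mem_Ico.mp this
    rw [Function.iterate_succ_apply', Function.iterate_succ_apply',
      iet_apply han hℓ, iet_apply ha'n hℓ']
    have h1 := partialSum_diff (d := d) a a' (ℓ : ℕ)
    have h2 := partialSumPerm_diff σ a a' ((σ ℓ : ℕ))
    set X := (iet d σ a)^[r] (partialSum d a i)
    set X' := (iet d σ a')^[r] (partialSum d a' i)
    have key : |X - partialSum d a (ℓ : ℕ) + partialSumPerm d σ a ((σ ℓ : ℕ)) -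
        (X' - partialSum d a' (ℓ : ℕ) + partialSumPerm d σ a' ((σ ℓ : ℕ)))| ≤
        |X - X'| + |partialSum d a (ℓ : ℕ) - partialSum d a' (ℓ : ℕ)| +
        |partialSumPerm d σ a ((σ ℓ : ℕ)) - partialSumPerm d σ a' ((σ ℓ : ℕ))| := by
      have := abs_sub (X - X') (partialSum d a (ℓ : ℕ) - partialSum d a' (ℓ : ℕ))
      calc _ = |(X - X') - (partialSum d a (ℓ : ℕ) - partialSum d a' (ℓ : ℕ)) +
            (partialSumPerm d σ a ((σ ℓ : ℕ)) - partialSumPerm d σ a' ((σ ℓ : ℕ)))| := by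
            ring_nf
        _ ≤ _ := by
            refine le_trans (abs_add_le _ _) ?_
            have h4 := abs_sub (X - X') (partialSum d a (ℓ : ℕ) - partialSum d a' (ℓ : ℕ))
            linarith
    refine key.trans ?_
    push_cast
    have h3 : 2 * (d : ℝ) * ‖a - a'‖ ≤ (d : ℝ) ^ 2 * ‖a - a'‖ :=
      mul_le_mul_of_nonneg_right (by nlinarith) hN
    linarith [IH']
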